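/- arXiv:2401.14824 — 4 statements merged into one kernel-verified Lean document; each statement's English description precedes it below -/
import Mathlib

section
/- Let θ : ℝ³ → ℝ³ be twice continuously differentiable and u : ℝ³ → ℝ³ be continuously differentiable, and set w = (I + Dθᵀ)(u ∘ (id + θ)), i.e. w(x) = (I + Dθ(x)ᵀ) u(x + θ(x)). Then for every x ∈ ℝ³, the skew-symmetric part of the Jacobian of w satisfies Dw(x) − Dw(x)ᵀ = (I + Dθ(x)ᵀ)(Du(x + θ(x)) − Du(x + θ(x))ᵀ)(I + Dθ(x)). -/
open Matrix

/-- Jacobian matrix of a vector field on ℝ³ in Cartesian coordinates. -/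
noncomputable def jacobian (v : (Fin 3 → ℝ) → (Fin 3 → ℝ)) (x : Fin 3 → ℝ) :
    Matrix (Fin 3) (Fin 3) ℝ :=
  Matrix.of fun i j => fderiv ℝ v x (Pi.single j 1) i

section aux

local notation "E" => (Fin 3 → ℝ)

private lemma clm_pi (f : E →L[ℝ] E) (z : E) (m : Fin 3) :
    f z m = ∑ l, z l * f (Pi.single l 1) m := by
  have hz : z = ∑ l, z l • (Pi.single l 1 : E) := by
    funext m
    simp [Pi.single_apply, Finset.sum_ite_eq']
  conv_lhs => rw [hz, map_sum]
  simp [Finset.sum_apply]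

end aux

theorem stmt_6 (θ u : (Fin 3 → ℝ) → (Fin 3 → ℝ))
    (hθ : ContDiff ℝ 2 θ) (hu : ContDiff ℝ 1 u)
    (w : (Fin 3 → ℝ) → (Fin 3 → ℝ))
    (hw : ∀ y, w y = ((1 : Matrix (Fin 3) (Fin 3) ℝ) + (jacobian θ y)ᵀ) *ᵥ u (y + θ y))
    (x : Fin 3 → ℝ) :
    jacobian w x - (jacobian w x)ᵀ
      = ((1 : Matrix (Fin 3) (Fin 3) ℝ) + (jacobian θ x)ᵀ)
          * (jacobian u (x + θ x) - (jacobian u (x + θ x))ᵀ)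
          * ((1 : Matrix (Fin 3) (Fin 3) ℝ) + jacobian θ x) := by
  classical
  set e : Fin 3 → (Fin 3 → ℝ) := fun j => Pi.single j 1 with he
  set φ : (Fin 3 → ℝ) → (Fin 3 → ℝ) := fun y => y + θ y with hφdef
  have hθ1 : ContDiff ℝ 1 θ := hθ.of_le (by norm_num)
  have hθd : Differentiable ℝ θ := hθ1.differentiable one_ne_zero
  have hud : Differentiable ℝ u := hu.differentiable one_ne_zero
  have hDθ : ContDiff ℝ 1 (fderiv ℝ θ) := hθ.fderiv_right (by norm_num)
  have hDθd : Differentiable ℝ (fderiv ℝ θ) := hDθ.differentiable one_ne_zero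
  -- abbreviations for the relevant derivatives at x
  set T : (Fin 3 → ℝ) →L[ℝ] (Fin 3 → ℝ) := fderiv ℝ θ x with hT
  set L : (Fin 3 → ℝ) →L[ℝ] (Fin 3 → ℝ) := fderiv ℝ u (φ x) with hL
  set Q := fderiv ℝ (fderiv ℝ θ) x with hQ
  have Dφ : HasFDerivAt φ (ContinuousLinearMap.id ℝ (Fin 3 → ℝ) + T) x :=
    (hasFDerivAt_id x).add (hθd x).hasFDerivAt
  have G : HasFDerivAt (fun y => u (φ y))
      (L.comp (ContinuousLinearMap.id ℝ (Fin 3 → ℝ) + T)) x :=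
    (hud (φ x)).hasFDerivAt.comp x Dφ
  set Lφ : (Fin 3 → ℝ) →L[ℝ] (Fin 3 → ℝ) :=
    L.comp (ContinuousLinearMap.id ℝ (Fin 3 → ℝ) + T) with hLφ
  -- rewrite w componentwise
  have hw' : w = fun y i => u (φ y) i + ∑ k, fderiv ℝ θ y (e i) k * u (φ y) k := by
    funext y i
    rw [hw y]
    simp only [mulVec, dotProduct, Matrix.add_apply, Matrix.one_apply, transpose_apply,
      jacobian, Matrix.of_apply]
    rw [Finset.sum_congr rfl (fun k _ => add_mul _ _ _), Finset.sum_add_distrib]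
    congr 1
    simp [Finset.sum_ite_eq, e]
    rfl
  -- derivative of each component of w at x
  have hWi : ∀ i, HasFDerivAt (fun y => u (φ y) i + ∑ k, fderiv ℝ θ y (e i) k * u (φ y) k)
      ((ContinuousLinearMap.proj i).comp Lφ
        + ∑ k, (fderiv ℝ θ x (e i) k •
            ((ContinuousLinearMap.proj k).comp Lφ)
          + u (φ x) k • (((ContinuousLinearMap.proj k).comp
              (ContinuousLinearMap.apply ℝ (Fin 3 → ℝ) (e i))).comp Q))) x := by
    intro i
    apply HasFDerivAt.add
    · exact ((ContinuousLinearMap.proj i).hasFDerivAt).comp x G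
    · apply HasFDerivAt.fun_sum
      intro k _
      have hp : HasFDerivAt (fun y => fderiv ℝ θ y (e i) k)
          (((ContinuousLinearMap.proj k).comp
            (ContinuousLinearMap.apply ℝ (Fin 3 → ℝ) (e i))).comp Q) x :=
        (((ContinuousLinearMap.proj k).comp
            (ContinuousLinearMap.apply ℝ (Fin 3 → ℝ) (e i))).hasFDerivAt).comp x
          (hDθd x).hasFDerivAt
      have hq : HasFDerivAt (fun y => u (φ y) k)
          ((ContinuousLinearMap.proj k).comp Lφ) x :=
        (ContinuousLinearMap.hasFDerivAt
          (ContinuousLinearMap.proj (R := ℝ) (φ := fun _ : Fin 3 => ℝ) k)).comp x G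
      exact hp.mul hq
  -- the full derivative of w at x
  have hW : HasFDerivAt w (ContinuousLinearMap.pi fun i =>
      ((ContinuousLinearMap.proj i).comp Lφ
        + ∑ k, (fderiv ℝ θ x (e i) k •
            ((ContinuousLinearMap.proj k).comp Lφ)
          + u (φ x) k • (((ContinuousLinearMap.proj k).comp
              (ContinuousLinearMap.apply ℝ (Fin 3 → ℝ) (e i))).comp Q)))) x := by
    rw [hw']
    exact hasFDerivAt_pi.2 hWi
  -- entrywise formula for jacobian w x
  have hJwE : ∀ i j, jacobian w x i j
      = Lφ (e j) i + ∑ k, (T (e i) k * Lφ (e j) k + u (φ x) k * Q (e j) (e i) k) := by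
    intro i j
    have : jacobian w x i j = fderiv ℝ w x (e j) i := rfl
    rw [this, hW.fderiv]
    simp only [ContinuousLinearMap.pi_apply, ContinuousLinearMap.add_apply,
      ContinuousLinearMap.coe_comp', Function.comp_apply, ContinuousLinearMap.proj_apply,
      ContinuousLinearMap.sum_apply, ContinuousLinearMap.smul_apply, smul_eq_mul,
      ContinuousLinearMap.apply_apply, Pi.add_apply]
    rfl
  -- symmetric part
  set S : Matrix (Fin 3) (Fin 3) ℝ :=
    Matrix.of (fun i j => ∑ k, u (φ x) k * Q (e i) (e j) k) with hS
  set M : Matrix (Fin 3) (Fin 3) ℝ :=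
    ((1 : Matrix (Fin 3) (Fin 3) ℝ) + (jacobian θ x)ᵀ)
      * jacobian u (φ x) * ((1 : Matrix (Fin 3) (Fin 3) ℝ) + jacobian θ x) with hM
  have hsymm : IsSymmSndFDerivAt ℝ θ x := (hθ.contDiffAt).isSymmSndFDerivAt (by norm_num)
  -- M entrywise
  have hMuE : ∀ m j, (jacobian u (φ x) * ((1 : Matrix (Fin 3) (Fin 3) ℝ) + jacobian θ x)) m j
      = Lφ (e j) m := by
    intro m j
    have : Lφ (e j) = L (e j + T (e j)) := by simp [Lφ]
    rw [this, map_add]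
    simp only [Matrix.mul_apply, Matrix.add_apply, Matrix.one_apply, jacobian, Matrix.of_apply]
    rw [Finset.sum_congr rfl (fun l _ => mul_add _ _ _), Finset.sum_add_distrib]
    have h1 : ∑ l, fderiv ℝ u (φ x) (Pi.single l 1) m * (if l = j then (1:ℝ) else 0)
        = L (e j) m := by
      simp [Finset.sum_ite_eq', e, hL, Matrix.one_apply]
    have h2 : ∑ l, fderiv ℝ u (φ x) (Pi.single l 1) m * fderiv ℝ θ x (Pi.single j 1) l
        = L (T (e j)) m := by
      rw [clm_pi L (T (e j)) m]
      exact Finset.sum_congr rfl fun l _ => by rw [mul_comm]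
    rw [Pi.add_apply, h1, h2]
  have hME : ∀ i j, M i j = Lφ (e j) i + ∑ k, T (e i) k * Lφ (e j) k := by
    intro i j
    rw [hM, Matrix.mul_assoc, Matrix.mul_apply]
    rw [Finset.sum_congr rfl (fun l _ => by rw [hMuE l j])]
    simp only [Matrix.add_apply, Matrix.one_apply, transpose_apply, jacobian, Matrix.of_apply]
    rw [Finset.sum_congr rfl (fun l _ => add_mul _ _ _), Finset.sum_add_distrib]
    have h1 : (∑ l, (if i = l then (1:ℝ) else 0) * Lφ (e j) l) = Lφ (e j) i := by
      simp [Finset.sum_ite_eq]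
    have h2 : (∑ l, fderiv ℝ θ x (Pi.single i 1) l * Lφ (e j) l)
        = ∑ k, T (e i) k * Lφ (e j) k := by
      exact Finset.sum_congr rfl fun l _ => rfl
    rw [h1, h2]
  -- decomposition
  have hdecomp : jacobian w x = S + M := by
    ext i j
    rw [Matrix.add_apply, hJwE i j, hME i j, hS]
    simp only [Matrix.of_apply]
    rw [Finset.sum_add_distrib]
    have : ∑ k, u (φ x) k * Q (e j) (e i) k = ∑ k, u (φ x) k * Q (e i) (e j) k := by
      rw [hsymm.eq (e j) (e i)]
    rw [this]
    ring
  have hStrans : Sᵀ = S := by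
    ext i j
    simp only [transpose_apply, hS, Matrix.of_apply]
    rw [hsymm.eq (e j) (e i)]
  -- conclude
  have hφx : φ x = x + θ x := rfl
  rw [hdecomp, Matrix.transpose_add, hStrans, hM, hφx]
  rw [Matrix.transpose_mul, Matrix.transpose_mul, Matrix.transpose_add, Matrix.transpose_add,
    Matrix.transpose_one, Matrix.transpose_transpose]
  rw [Matrix.mul_sub, Matrix.sub_mul]
  abel_nf
  simp only [Matrix.mul_assoc]
end

section
/- Let θ : ℝ³ → ℝ³ be twice continuously differentiable and u : ℝ³ → ℝ³ be continuously differentiable, and suppose that at a point x ∈ ℝ³ the matrix I + Dθ(x) is invertible. Define Φ¹_θ u : ℝ³ → ℝ³ by (Φ¹_θ u)(y) = (I + Dθ(y)ᵀ) u(y + θ(y)). Then curl(Φ¹_θ u)(x) = det(I + Dθ(x)) (I + Dθ(x))⁻¹ (curl u)(x + θ(x)). (This is the commutation relation curl ∘ Φ¹_θ = Φ²_θ ∘ curl for smooth fields.) -/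
open Matrix

/-- Curl of a vector field on ℝ³:
curl u = (∂₂u₃ − ∂₃u₂, ∂₃u₁ − ∂₁u₃, ∂₁u₂ − ∂₂u₁) (1-based indexing). -/
noncomputable def curl (u : (Fin 3 → ℝ) → (Fin 3 → ℝ)) (x : Fin 3 → ℝ) : Fin 3 → ℝ :=
  ![fderiv ℝ u x (Pi.single 1 1) 2 - fderiv ℝ u x (Pi.single 2 1) 1,
    fderiv ℝ u x (Pi.single 2 1) 0 - fderiv ℝ u x (Pi.single 0 1) 2,
    fderiv ℝ u x (Pi.single 0 1) 1 - fderiv ℝ u x (Pi.single 1 1) 0]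

lemma clm_sum_apply (L : (Fin 3 → ℝ) →L[ℝ] (Fin 3 → ℝ)) (w : Fin 3 → ℝ) (m : Fin 3) :
    L w m = ∑ l, w l * L (Pi.single l 1) m := by
  have hw : w = ∑ l, w l • (Pi.single l 1 : Fin 3 → ℝ) := by
    funext k; simp [Pi.single_apply, Finset.sum_ite_eq', mul_comm]
  conv_lhs => rw [hw]
  simp [Finset.sum_apply]

set_option maxHeartbeats 1000000 in
theorem stmt_7 (θ u : (Fin 3 → ℝ) → (Fin 3 → ℝ))
    (hθ : ContDiff ℝ 2 θ) (hu : ContDiff ℝ 1 u) (x : Fin 3 → ℝ)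
    (hinv : IsUnit ((1 : Matrix (Fin 3) (Fin 3) ℝ) + jacobian θ x).det) :
    curl (fun y => ((1 : Matrix (Fin 3) (Fin 3) ℝ) + (jacobian θ y)ᵀ) *ᵥ u (y + θ y)) x
      = ((1 : Matrix (Fin 3) (Fin 3) ℝ) + jacobian θ x).det •
          (((1 : Matrix (Fin 3) (Fin 3) ℝ) + jacobian θ x)⁻¹ *ᵥ curl u (x + θ x)) := by
  classical
  have hθd : Differentiable ℝ θ := hθ.differentiable two_ne_zero
  have hud : Differentiable ℝ u := hu.differentiable one_ne_zero
  have hDθd : Differentiable ℝ (fderiv ℝ θ) :=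
    (hθ.fderiv_right (m := 1) (by norm_num)).differentiable one_ne_zero
  set Θ' : (Fin 3 → ℝ) →L[ℝ] (Fin 3 → ℝ) := fderiv ℝ θ x with hΘ'
  set Θ'' : (Fin 3 → ℝ) →L[ℝ] ((Fin 3 → ℝ) →L[ℝ] (Fin 3 → ℝ)) :=
    fderiv ℝ (fderiv ℝ θ) x with hΘ''
  have hsym : ∀ a b : Fin 3 → ℝ, Θ'' a b = Θ'' b a :=
    second_derivative_symmetric (fun y => (hθd y).hasFDerivAt) (hDθd x).hasFDerivAt
  set F' : (Fin 3 → ℝ) →L[ℝ] (Fin 3 → ℝ) :=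
    (fderiv ℝ u (x + θ x)).comp (ContinuousLinearMap.id ℝ (Fin 3 → ℝ) + Θ') with hF'
  have hφd : HasFDerivAt (fun y => y + θ y) (ContinuousLinearMap.id ℝ (Fin 3 → ℝ) + Θ') x :=
    (hasFDerivAt_id x).add (hθd x).hasFDerivAt
  have hfd : HasFDerivAt (fun y => u (y + θ y)) F' x :=
    ((hud (x + θ x)).hasFDerivAt).comp x hφd
  -- derivative of jacobian entries
  set ℓ : Fin 3 → Fin 3 → (((Fin 3 → ℝ) →L[ℝ] (Fin 3 → ℝ)) →L[ℝ] ℝ) := fun i m =>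
    (ContinuousLinearMap.proj m).comp
      (ContinuousLinearMap.apply ℝ (Fin 3 → ℝ) (Pi.single i 1)) with hℓ
  have hg : ∀ i m : Fin 3,
      HasFDerivAt (fun y => fderiv ℝ θ y (Pi.single i 1) m) ((ℓ i m).comp Θ'') x :=
    fun i m => ((ℓ i m).hasFDerivAt).comp x (hDθd x).hasFDerivAt
  -- component derivatives
  set Di : Fin 3 → ((Fin 3 → ℝ) →L[ℝ] ℝ) := fun i =>
    (ContinuousLinearMap.proj i).comp F' +
      ∑ m : Fin 3, (fderiv ℝ θ x (Pi.single i 1) m • (ContinuousLinearMap.proj m).comp F'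
        + u (x + θ x) m • (ℓ i m).comp Θ'') with hDi
  have hvdi : ∀ i : Fin 3,
      HasFDerivAt (fun y => u (y + θ y) i +
        ∑ m : Fin 3, fderiv ℝ θ y (Pi.single i 1) m * u (y + θ y) m) (Di i) x := by
    intro i
    have h := ((ContinuousLinearMap.proj i).hasFDerivAt.comp x hfd).add
      (HasFDerivAt.sum (u := Finset.univ) fun m _ =>
        (hg i m).mul ((ContinuousLinearMap.proj m).hasFDerivAt.comp x hfd))
    exact h.congr_of_eventuallyEq (Filter.Eventually.of_forall fun y => by simp [Finset.sum_apply])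
  have hveq : (fun y => ((1 : Matrix (Fin 3) (Fin 3) ℝ) + (jacobian θ y)ᵀ) *ᵥ u (y + θ y))
      = fun y => fun i => u (y + θ y) i +
        ∑ m : Fin 3, fderiv ℝ θ y (Pi.single i 1) m * u (y + θ y) m := by
    funext y i
    simp [Matrix.mulVec, dotProduct, Matrix.add_apply, Matrix.one_apply,
      Matrix.transpose_apply, jacobian, add_mul, Finset.sum_add_distrib, Finset.sum_ite_eq]
  have hV : HasFDerivAt
      (fun y => ((1 : Matrix (Fin 3) (Fin 3) ℝ) + (jacobian θ y)ᵀ) *ᵥ u (y + θ y))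
      (ContinuousLinearMap.pi Di) x := by
    rw [hveq]
    exact hasFDerivAt_pi.2 hvdi
  have hDv : fderiv ℝ
      (fun y => ((1 : Matrix (Fin 3) (Fin 3) ℝ) + (jacobian θ y)ᵀ) *ᵥ u (y + θ y)) x
      = ContinuousLinearMap.pi Di := hV.fderiv
  -- scalar data
  set p : Fin 3 → Fin 3 → ℝ := fun a b => Θ' (Pi.single b 1) a with hp
  set r : Fin 3 → Fin 3 → ℝ := fun m l => fderiv ℝ u (x + θ x) (Pi.single l 1) m with hr
  set q : Fin 3 → Fin 3 → Fin 3 → ℝ := fun a b m => Θ'' (Pi.single a 1) (Pi.single b 1) m with hq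
  have hqs : ∀ a b m : Fin 3, q a b m = q b a m := fun a b m => by
    simp only [hq]; rw [hsym]
  have hF'sum : ∀ m j : Fin 3, F' (Pi.single j 1) m
      = ∑ l, ((Pi.single j 1 : Fin 3 → ℝ) l + p l j) * r m l := by
    intro m j
    have : F' (Pi.single j 1) m
        = fderiv ℝ u (x + θ x) (Pi.single j 1 + Θ' (Pi.single j 1)) m := rfl
    rw [this, clm_sum_apply]
    simp [hp, hr]
  have hcurl : ∀ i j : Fin 3,
      fderiv ℝ (fun y => ((1 : Matrix (Fin 3) (Fin 3) ℝ) + (jacobian θ y)ᵀ) *ᵥ u (y + θ y)) x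
        (Pi.single j 1) i
      = F' (Pi.single j 1) i
        + ∑ m : Fin 3, (p m i * F' (Pi.single j 1) m + u (x + θ x) m * q j i m) := by
    intro i j
    rw [hDv]
    simp [hDi, ContinuousLinearMap.sum_apply, hℓ, hp, hq, ContinuousLinearMap.apply_apply,
      mul_comm]
    rfl
  -- jacobian entries are p
  have hPent : ∀ a b : Fin 3, jacobian θ x a b = p a b := fun a b => rfl
  set A : Matrix (Fin 3) (Fin 3) ℝ := (1 : Matrix (Fin 3) (Fin 3) ℝ) + jacobian θ x with hA
  have hR'e : ∀ m j : Fin 3, F' (Pi.single j 1) m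
      = r m j + ∑ l, p l j * r m l := by
    intro m j
    rw [hF'sum]
    simp [add_mul, Finset.sum_add_distrib, Pi.single_apply, ite_mul, one_mul, zero_mul,
      Finset.sum_ite_eq', add_comm]
  have main : A *ᵥ (curl (fun y =>
        ((1 : Matrix (Fin 3) (Fin 3) ℝ) + (jacobian θ y)ᵀ) *ᵥ u (y + θ y)) x)
      = A.det • curl u (x + θ x) := by
    have hq01 : ∀ m, q 1 0 m = q 0 1 m := fun m => hqs 1 0 m
    have hq02 : ∀ m, q 2 0 m = q 0 2 m := fun m => hqs 2 0 m
    have hq12 : ∀ m, q 2 1 m = q 1 2 m := fun m => hqs 2 1 m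
    have hrdef : ∀ m l : Fin 3, fderiv ℝ u (x + θ x) (Pi.single l 1) m = r m l :=
      fun _ _ => rfl
    funext i
    fin_cases i <;>
    · simp only [Fin.zero_eta, Fin.mk_one, Fin.reduceFinMk, Fin.isValue, hA,
        Matrix.mulVec, dotProduct, Fin.sum_univ_three,
        Matrix.add_apply, Matrix.one_apply, hPent, curl, hcurl, hR'e, hrdef,
        Matrix.cons_val', Matrix.cons_val_zero, Matrix.cons_val_one, Matrix.head_cons,
        Matrix.cons_val_two, Matrix.tail_cons, Matrix.cons_val_fin_one, Matrix.empty_val',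
        Matrix.head_fin_const, Matrix.det_fin_three, Pi.smul_apply, smul_eq_mul,
        hq01, hq02, hq12, Fin.reduceEq, if_false, if_true, reduceIte]
      ring
  have hAinv : A⁻¹ * A = 1 := Matrix.nonsing_inv_mul A hinv
  calc curl (fun y => ((1 : Matrix (Fin 3) (Fin 3) ℝ) + (jacobian θ y)ᵀ) *ᵥ u (y + θ y)) x
      = A⁻¹ *ᵥ (A *ᵥ curl (fun y =>
          ((1 : Matrix (Fin 3) (Fin 3) ℝ) + (jacobian θ y)ᵀ) *ᵥ u (y + θ y)) x) := by
        rw [Matrix.mulVec_mulVec, hAinv, Matrix.one_mulVec]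
    _ = A⁻¹ *ᵥ (A.det • curl u (x + θ x)) := by rw [main]
    _ = A.det • (A⁻¹ *ᵥ curl u (x + θ x)) := Matrix.mulVec_smul _ _ _
end

section
/- (Piola identity.) Let φ : ℝ³ → ℝ³ be twice continuously differentiable and let cof Dφ = (adj Dφ)ᵀ denote the cofactor matrix of its Jacobian. Then each row of the cofactor matrix is divergence free: for every x ∈ ℝ³ and each i ∈ {1,2,3}, Σ_{j=1}^{3} ∂_j (cof Dφ(x))_{ij} = 0. -/
open Matrix

/-- Cofactor matrix of a 3×3 matrix: the transpose of the adjugate. -/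
def cof (M : Matrix (Fin 3) (Fin 3) ℝ) : Matrix (Fin 3) (Fin 3) ℝ :=
  (M.adjugate)ᵀ

section aux

variable (φ : (Fin 3 → ℝ) → (Fin 3 → ℝ)) (hφ : ContDiff ℝ 2 φ)

lemma jac_entry_fderiv (hφ : ContDiff ℝ 2 φ) (x : Fin 3 → ℝ) (a b j : Fin 3) :
    fderiv ℝ (fun y => jacobian φ y a b) x (Pi.single j 1)
      = fderiv ℝ (fderiv ℝ φ) x (Pi.single j 1) (Pi.single b 1) a := by
  have hd : DifferentiableAt ℝ (fderiv ℝ φ) x := by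
    have : ContDiff ℝ 1 (fderiv ℝ φ) := hφ.fderiv_right (by norm_num)
    exact this.differentiable (by norm_num) x
  set L : ((Fin 3 → ℝ) →L[ℝ] (Fin 3 → ℝ)) →L[ℝ] ℝ :=
    (ContinuousLinearMap.proj a).comp
      (ContinuousLinearMap.apply ℝ (Fin 3 → ℝ) (Pi.single b 1)) with hL
  have h1 : (fun y => jacobian φ y a b) = fun y => L (fderiv ℝ φ y) := by
    funext y; simp [jacobian, hL]
  rw [h1, show (fun y => L (fderiv ℝ φ y)) = ⇑L ∘ fderiv ℝ φ from rfl,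
    (L.hasFDerivAt.comp x hd.hasFDerivAt).fderiv]
  simp [hL]

lemma jac_entry_diff (hφ : ContDiff ℝ 2 φ) (a b : Fin 3) :
    Differentiable ℝ (fun y => jacobian φ y a b) := by
  have h2 : ContDiff ℝ 1 (fderiv ℝ φ) := hφ.fderiv_right (by norm_num)
  have hd : Differentiable ℝ (fderiv ℝ φ) := h2.differentiable (by norm_num)
  set L : ((Fin 3 → ℝ) →L[ℝ] (Fin 3 → ℝ)) →L[ℝ] ℝ :=
    (ContinuousLinearMap.proj a).comp
      (ContinuousLinearMap.apply ℝ (Fin 3 → ℝ) (Pi.single b 1)) with hL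
  have h1 : (fun y => jacobian φ y a b) = fun y => L (fderiv ℝ φ y) := by
    funext y; simp [jacobian, hL]
  rw [h1]
  exact L.differentiable.comp hd

lemma sym (hφ : ContDiff ℝ 2 φ) (x : Fin 3 → ℝ) (a b j : Fin 3) :
    fderiv ℝ (fderiv ℝ φ) x (Pi.single j 1) (Pi.single b 1) a
      = fderiv ℝ (fderiv ℝ φ) x (Pi.single b 1) (Pi.single j 1) a := by
  have := (hφ.contDiffAt (x := x)).isSymmSndFDerivAt (by norm_num)
  rw [this (Pi.single j 1) (Pi.single b 1)]

end aux

/-- Piola identity: each row of the cofactor matrix of the Jacobian of a C² map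
is divergence free. -/
theorem stmt_8 (φ : (Fin 3 → ℝ) → (Fin 3 → ℝ)) (hφ : ContDiff ℝ 2 φ)
    (x : Fin 3 → ℝ) (i : Fin 3) :
    ∑ j : Fin 3, fderiv ℝ (fun y => cof (jacobian φ y) i j) x (Pi.single j 1) = 0 := by
  set P : Fin 3 → Fin 3 → (Fin 3 → ℝ) → ℝ := fun a b y => jacobian φ y a b with hP
  have hdiff : ∀ a b, Differentiable ℝ (P a b) := fun a b => jac_entry_diff φ hφ a b
  -- derivative of a product of entries
  have hprod : ∀ (a b c d j : Fin 3),
      fderiv ℝ (fun y => P a b y * P c d y) x (Pi.single j 1)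
        = fderiv ℝ (fderiv ℝ φ) x (Pi.single b 1) (Pi.single j 1) a * P c d x
          + P a b x * fderiv ℝ (fderiv ℝ φ) x (Pi.single d 1) (Pi.single j 1) c := by
    intro a b c d j
    rw [fderiv_fun_mul ((hdiff a b) x) ((hdiff c d) x)]
    simp only [ContinuousLinearMap.add_apply, ContinuousLinearMap.smul_apply,
      smul_eq_mul]
    rw [jac_entry_fderiv φ hφ x a b j, jac_entry_fderiv φ hφ x c d j,
      sym φ hφ x a b j, sym φ hφ x c d j]
    ring
  have hcof : ∀ y, cof (jacobian φ y) = fun i j => (adjugate (jacobian φ y)) j i := by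
    intro y; funext i j; rfl
  have hadj : ∀ (y : Fin 3 → ℝ) (a b : Fin 3), adjugate (jacobian φ y) a b =
      (!![jacobian φ y 1 1 * jacobian φ y 2 2 - jacobian φ y 1 2 * jacobian φ y 2 1,
      -(jacobian φ y 0 1 * jacobian φ y 2 2) + jacobian φ y 0 2 * jacobian φ y 2 1,
      jacobian φ y 0 1 * jacobian φ y 1 2 - jacobian φ y 0 2 * jacobian φ y 1 1;
      -(jacobian φ y 1 0 * jacobian φ y 2 2) + jacobian φ y 1 2 * jacobian φ y 2 0,
      jacobian φ y 0 0 * jacobian φ y 2 2 - jacobian φ y 0 2 * jacobian φ y 2 0,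
      -(jacobian φ y 0 0 * jacobian φ y 1 2) + jacobian φ y 0 2 * jacobian φ y 1 0;
      jacobian φ y 1 0 * jacobian φ y 2 1 - jacobian φ y 1 1 * jacobian φ y 2 0,
      -(jacobian φ y 0 0 * jacobian φ y 2 1) + jacobian φ y 0 1 * jacobian φ y 2 0,
      jacobian φ y 0 0 * jacobian φ y 1 1 - jacobian φ y 0 1 * jacobian φ y 1 0] : Matrix (Fin 3) (Fin 3) ℝ) a b := by
    intro y a b
    rw [adjugate_fin_three]
  have hs : ∀ a b c : Fin 3,
      fderiv ℝ (fderiv ℝ φ) x (Pi.single b 1) (Pi.single c 1) a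
        = fderiv ℝ (fderiv ℝ φ) x (Pi.single c 1) (Pi.single b 1) a :=
    fun a b c => sym φ hφ x a c b
  have hsub : ∀ a b c d e f g h j : Fin 3,
      fderiv ℝ (fun y => P a b y * P c d y - P e f y * P g h y) x (Pi.single j 1)
        = fderiv ℝ (fderiv ℝ φ) x (Pi.single b 1) (Pi.single j 1) a * P c d x
          + P a b x * fderiv ℝ (fderiv ℝ φ) x (Pi.single d 1) (Pi.single j 1) c
          - (fderiv ℝ (fderiv ℝ φ) x (Pi.single f 1) (Pi.single j 1) e * P g h x
          + P e f x * fderiv ℝ (fderiv ℝ φ) x (Pi.single h 1) (Pi.single j 1) g) := by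
    intro a b c d e f g h j
    rw [fderiv_fun_sub (show DifferentiableAt ℝ (fun y => P a b y * P c d y) x from ((hdiff a b).mul (hdiff c d)) x) (show DifferentiableAt ℝ (fun y => P e f y * P g h y) x from ((hdiff e f).mul (hdiff g h)) x)]
    simp only [ContinuousLinearMap.coe_sub', Pi.sub_apply]
    rw [hprod, hprod]
  have ecof : ∀ (a b y : _), cof (jacobian φ y) a b = adjugate (jacobian φ y) b a :=
    fun a b y => rfl
  fin_cases i
  · have e0 : (fun y => cof (jacobian φ y) 0 0)
        = fun y => P 1 1 y * P 2 2 y - P 1 2 y * P 2 1 y := by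
      funext y; rw [ecof, hadj]; simp [hP]
    have e1 : (fun y => cof (jacobian φ y) 0 1)
        = fun y => P 1 2 y * P 2 0 y - P 1 0 y * P 2 2 y := by
      funext y; rw [ecof, hadj]; simp [hP]; ring
    have e2 : (fun y => cof (jacobian φ y) 0 2)
        = fun y => P 1 0 y * P 2 1 y - P 1 1 y * P 2 0 y := by
      funext y; rw [ecof, hadj]; simp [hP]
    rw [Fin.sum_univ_three]
    rw [show ((⟨0, by norm_num⟩ : Fin 3) = 0) from rfl, e0, e1, e2, hsub, hsub, hsub]
    linear_combination (P 2 2 x) * hs 1 1 0 + (P 1 1 x) * hs 2 2 0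
      - (P 2 1 x) * hs 1 2 0 - (P 1 2 x) * hs 2 1 0
      + (P 2 0 x) * hs 1 2 1 - (P 1 0 x) * hs 2 2 1
  · have e0 : (fun y => cof (jacobian φ y) 1 0)
        = fun y => P 0 2 y * P 2 1 y - P 0 1 y * P 2 2 y := by
      funext y; rw [ecof, hadj]; simp [hP]; ring
    have e1 : (fun y => cof (jacobian φ y) 1 1)
        = fun y => P 0 0 y * P 2 2 y - P 0 2 y * P 2 0 y := by
      funext y; rw [ecof, hadj]; simp [hP]
    have e2 : (fun y => cof (jacobian φ y) 1 2)
        = fun y => P 0 1 y * P 2 0 y - P 0 0 y * P 2 1 y := by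
      funext y; rw [ecof, hadj]; simp [hP]; ring
    rw [Fin.sum_univ_three]
    rw [show ((⟨1, by norm_num⟩ : Fin 3) = 1) from rfl, e0, e1, e2, hsub, hsub, hsub]
    linear_combination - (P 2 2 x) * hs 0 1 0 - (P 0 1 x) * hs 2 2 0
      + (P 2 1 x) * hs 0 2 0 + (P 0 2 x) * hs 2 1 0
      + (P 0 0 x) * hs 2 2 1 - (P 2 0 x) * hs 0 2 1
  · have e0 : (fun y => cof (jacobian φ y) 2 0)
        = fun y => P 0 1 y * P 1 2 y - P 0 2 y * P 1 1 y := by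
      funext y; rw [ecof, hadj]; simp [hP]
    have e1 : (fun y => cof (jacobian φ y) 2 1)
        = fun y => P 0 2 y * P 1 0 y - P 0 0 y * P 1 2 y := by
      funext y; rw [ecof, hadj]; simp [hP]; ring
    have e2 : (fun y => cof (jacobian φ y) 2 2)
        = fun y => P 0 0 y * P 1 1 y - P 0 1 y * P 1 0 y := by
      funext y; rw [ecof, hadj]; simp [hP]
    rw [Fin.sum_univ_three]
    rw [show ((⟨2, by norm_num⟩ : Fin 3) = 2) from rfl, e0, e1, e2, hsub, hsub, hsub]
    linear_combination (P 1 2 x) * hs 0 1 0 + (P 0 1 x) * hs 1 2 0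
      - (P 1 1 x) * hs 0 2 0 - (P 0 2 x) * hs 1 1 0
      - (P 0 0 x) * hs 1 2 1 + (P 1 0 x) * hs 0 2 1
end

section
/- Let θ : ℝ³ → ℝ³ be twice continuously differentiable with I + Dθ(y) invertible for all y, and let u : ℝ³ → ℝ³ be continuously differentiable. Define Φ²_θ u : ℝ³ → ℝ³ by (Φ²_θ u)(y) = det(I + Dθ(y)) (I + Dθ(y))⁻¹ u(y + θ(y)). Then for every x ∈ ℝ³, div(Φ²_θ u)(x) = det(I + Dθ(x)) (div u)(x + θ(x)). (This is the commutation relation div ∘ Φ²_θ = Φ³_θ ∘ div for smooth fields.) -/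
open Matrix

/-- Divergence of a vector field on ℝ³. -/
noncomputable def div3 (v : (Fin 3 → ℝ) → (Fin 3 → ℝ)) (x : Fin 3 → ℝ) : ℝ :=
  ∑ i : Fin 3, fderiv ℝ v x (Pi.single i 1) i

/-- entry of `I + Dθ`. -/
noncomputable def aE (θ : (Fin 3 → ℝ) → (Fin 3 → ℝ)) (a b : Fin 3) (y : Fin 3 → ℝ) : ℝ :=
  ((1 : Matrix (Fin 3) (Fin 3) ℝ) + jacobian θ y) a b

/-- component of `u ∘ (id + θ)`. -/
noncomputable def uC (θ u : (Fin 3 → ℝ) → (Fin 3 → ℝ)) (j : Fin 3) (y : Fin 3 → ℝ) : ℝ :=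
  u (y + θ y) j

set_option maxHeartbeats 2000000 in
theorem stmt_9 (θ u : (Fin 3 → ℝ) → (Fin 3 → ℝ))
    (hθ : ContDiff ℝ 2 θ) (hu : ContDiff ℝ 1 u)
    (hinv : ∀ y, IsUnit ((1 : Matrix (Fin 3) (Fin 3) ℝ) + jacobian θ y).det)
    (x : Fin 3 → ℝ) :
    div3 (fun y => ((1 : Matrix (Fin 3) (Fin 3) ℝ) + jacobian θ y).det •
            (((1 : Matrix (Fin 3) (Fin 3) ℝ) + jacobian θ y)⁻¹ *ᵥ u (y + θ y))) x
      = ((1 : Matrix (Fin 3) (Fin 3) ℝ) + jacobian θ x).det * div3 u (x + θ x) := by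
  classical
  have hθd : Differentiable ℝ θ := hθ.differentiable two_ne_zero
  have hud : Differentiable ℝ u := hu.differentiable one_ne_zero
  have hθ1 : ContDiff ℝ 1 (fderiv ℝ θ) := hθ.fderiv_right (by norm_num)
  have hθ1d : Differentiable ℝ (fderiv ℝ θ) := hθ1.differentiable one_ne_zero
  -- Step 0: rewrite `det • A⁻¹ *ᵥ v` as `adjugate A *ᵥ v`
  have hrw : (fun y => ((1 : Matrix (Fin 3) (Fin 3) ℝ) + jacobian θ y).det •
            (((1 : Matrix (Fin 3) (Fin 3) ℝ) + jacobian θ y)⁻¹ *ᵥ u (y + θ y)))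
      = fun y => ((1 : Matrix (Fin 3) (Fin 3) ℝ) + jacobian θ y).adjugate *ᵥ u (y + θ y) := by
    funext y
    have hd : ((1 : Matrix (Fin 3) (Fin 3) ℝ) + jacobian θ y).det ≠ 0 :=
      (hinv y).ne_zero
    rw [Matrix.inv_def, Ring.inverse_eq_inv', Matrix.smul_mulVec,
      smul_smul, mul_inv_cancel₀ hd, one_smul]
  -- derivatives of the entries of `I + Dθ`
  have ha : ∀ a b : Fin 3, HasFDerivAt (aE θ a b)
      (((ContinuousLinearMap.proj a).comp
          (ContinuousLinearMap.apply ℝ (Fin 3 → ℝ) (Pi.single b 1))).comp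
        (fderiv ℝ (fderiv ℝ θ) x)) x := by
    intro a b
    refine ((((ContinuousLinearMap.proj a).comp
        (ContinuousLinearMap.apply ℝ (Fin 3 → ℝ) (Pi.single b 1))).hasFDerivAt.comp x
        ((hθ1d x).hasFDerivAt)).const_add
        ((1 : Matrix (Fin 3) (Fin 3) ℝ) a b)).congr_of_eventuallyEq
      (Filter.Eventually.of_forall fun y => ?_)
    simp [aE, jacobian, Matrix.add_apply, Function.comp]
  -- derivatives of components of `u ∘ (id + θ)`
  have hU : ∀ j : Fin 3, HasFDerivAt (uC θ u j)
      ((ContinuousLinearMap.proj j).comp ((fderiv ℝ u (x + θ x)).comp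
        (ContinuousLinearMap.id ℝ (Fin 3 → ℝ) + fderiv ℝ θ x))) x := by
    intro j
    have hφ : HasFDerivAt (fun y => y + θ y)
        (ContinuousLinearMap.id ℝ (Fin 3 → ℝ) + fderiv ℝ θ x) x :=
      (hasFDerivAt_id x).add (hθd x).hasFDerivAt
    have h2 : HasFDerivAt u (fderiv ℝ u (x + θ x)) (x + θ x) := (hud (x + θ x)).hasFDerivAt
    exact (ContinuousLinearMap.proj j).hasFDerivAt.comp x (h2.comp x hφ)
  -- derivatives of the three components of the transformed field
  have h0 := (((((ha 1 1).mul (ha 2 2)).sub ((ha 1 2).mul (ha 2 1))).mul (hU 0)).add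
      ((((((ha 0 1).mul (ha 2 2)).neg).add ((ha 0 2).mul (ha 2 1))).mul (hU 1)).add
      ((((ha 0 1).mul (ha 1 2)).sub ((ha 0 2).mul (ha 1 1))).mul (hU 2)))).congr_of_eventuallyEq
    (Filter.Eventually.of_forall fun y => by
      show (((1 : Matrix (Fin 3) (Fin 3) ℝ) + jacobian θ y).adjugate *ᵥ u (y + θ y)) (0 : Fin 3) = _
      rw [adjugate_fin_three]
      simp [Matrix.mulVec, dotProduct, Fin.sum_univ_three, aE, uC]
      ring)
  have h1 := ((((((ha 1 0).mul (ha 2 2)).neg).add ((ha 1 2).mul (ha 2 0))).mul (hU 0)).add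
      (((((ha 0 0).mul (ha 2 2)).sub ((ha 0 2).mul (ha 2 0))).mul (hU 1)).add
      (((((ha 0 0).mul (ha 1 2)).neg).add ((ha 0 2).mul (ha 1 0))).mul (hU 2)))).congr_of_eventuallyEq
    (Filter.Eventually.of_forall fun y => by
      show (((1 : Matrix (Fin 3) (Fin 3) ℝ) + jacobian θ y).adjugate *ᵥ u (y + θ y)) (1 : Fin 3) = _
      rw [adjugate_fin_three]
      simp [Matrix.mulVec, dotProduct, Fin.sum_univ_three, aE, uC]
      ring)
  have h2 := (((((ha 1 0).mul (ha 2 1)).sub ((ha 1 1).mul (ha 2 0))).mul (hU 0)).add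
      ((((((ha 0 0).mul (ha 2 1)).neg).add ((ha 0 1).mul (ha 2 0))).mul (hU 1)).add
      ((((ha 0 0).mul (ha 1 1)).sub ((ha 0 1).mul (ha 1 0))).mul (hU 2)))).congr_of_eventuallyEq
    (Filter.Eventually.of_forall fun y => by
      show (((1 : Matrix (Fin 3) (Fin 3) ℝ) + jacobian θ y).adjugate *ᵥ u (y + θ y)) (2 : Fin 3) = _
      rw [adjugate_fin_three]
      simp [Matrix.mulVec, dotProduct, Fin.sum_univ_three, aE, uC]
      ring)
  have hdiffs : ∀ i : Fin 3, DifferentiableAt ℝ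
      (fun y => (((1 : Matrix (Fin 3) (Fin 3) ℝ) + jacobian θ y).adjugate *ᵥ u (y + θ y)) i) x := by
    intro i; fin_cases i
    exacts [h0.differentiableAt, h1.differentiableAt, h2.differentiableAt]
  have hfd : fderiv ℝ (fun y => ((1 : Matrix (Fin 3) (Fin 3) ℝ) + jacobian θ y).adjugate *ᵥ u (y + θ y)) x
      = ContinuousLinearMap.pi (fun i => fderiv ℝ
          (fun y => (((1 : Matrix (Fin 3) (Fin 3) ℝ) + jacobian θ y).adjugate *ᵥ u (y + θ y)) i) x) :=
    fderiv_pi (φ := fun i y => (((1 : Matrix (Fin 3) (Fin 3) ℝ) + jacobian θ y).adjugate *ᵥ u (y + θ y)) i) hdiffs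
  have hbasis : ∀ v : Fin 3 → ℝ, v = v 0 • (Pi.single 0 1 : Fin 3 → ℝ)
      + v 1 • (Pi.single 1 1 : Fin 3 → ℝ) + v 2 • (Pi.single 2 1 : Fin 3 → ℝ) := by
    intro v; funext k; fin_cases k <;> simp [Pi.single_apply]
  have hDuexp : ∀ (v : Fin 3 → ℝ) (j : Fin 3), fderiv ℝ u (x + θ x) v j
      = v 0 * fderiv ℝ u (x + θ x) (Pi.single 0 1) j
        + v 1 * fderiv ℝ u (x + θ x) (Pi.single 1 1) j
        + v 2 * fderiv ℝ u (x + θ x) (Pi.single 2 1) j := by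
    intro v j
    conv_lhs => rw [hbasis v]
    simp
  have hsym : ∀ v w : Fin 3 → ℝ, fderiv ℝ (fderiv ℝ θ) x v w = fderiv ℝ (fderiv ℝ θ) x w v :=
    fun v w => (hθ.contDiffAt.isSymmSndFDerivAt (by simp [minSmoothness_of_isRCLikeNormedField])) v w
  have hentry : ∀ a b : Fin 3, ((1 : Matrix (Fin 3) (Fin 3) ℝ) + jacobian θ x) a b
      = (if a = b then (1:ℝ) else 0) + fderiv ℝ θ x (Pi.single b 1) a := by
    intro a b; simp [Matrix.add_apply, Matrix.one_apply, jacobian]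
  rw [hrw]
  simp only [div3]
  rw [hfd]
  simp only [ContinuousLinearMap.pi_apply, Fin.sum_univ_three]
  rw [h0.fderiv, h1.fderiv, h2.fderiv, Matrix.det_fin_three]
  simp only [ContinuousLinearMap.add_apply, ContinuousLinearMap.sub_apply,
    ContinuousLinearMap.smul_apply, ContinuousLinearMap.neg_apply, ContinuousLinearMap.coe_comp',
    Function.comp_apply, ContinuousLinearMap.proj_apply, ContinuousLinearMap.apply_apply,
    ContinuousLinearMap.coe_id', id_eq, map_add, Pi.add_apply, smul_eq_mul]
  simp only [hDuexp (fderiv ℝ θ x (Pi.single 0 1)), hDuexp (fderiv ℝ θ x (Pi.single 1 1)),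
    hDuexp (fderiv ℝ θ x (Pi.single 2 1))]
  rw [hsym (Pi.single 1 1) (Pi.single 0 1), hsym (Pi.single 2 1) (Pi.single 0 1),
    hsym (Pi.single 2 1) (Pi.single 1 1)]
  simp only [Pi.mul_apply, Pi.sub_apply, Pi.neg_apply, Pi.add_apply, uC, aE, hentry]
  norm_num [Fin.ext_iff]
  ring
end
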